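/- Let k ≥ 0 be an integer and let L = (a, b) ∈ ℤ × (Fin 7 → ℤ). Then ⟨L, ξ⟩ ≥ k for every exceptional class ξ ∈ E_7 if and only if: b_i ≥ k for all i; a ≥ b_i + b_j + k for all distinct i ≠ j; 2a ≥ ∑_{i∈T} b_i + k for every 5-element subset T of Fin 7; and 3a ≥ 2b_i + ∑_{j ≠ i} b_j + k for every index i. -/

import Mathlib

/-- The intersection pairing on `Λ₇ = ℤ × (Fin 7 → ℤ)`:
`⟨(a,b),(d,m)⟩ = a·d - ∑ bᵢ·mᵢ`. -/
def pairing7 (L ξ : ℤ × (Fin 7 → ℤ)) : ℤ :=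
  L.1 * ξ.1 - ∑ i, L.2 i * ξ.2 i

/-- A class `(d, m)` in `Λ₇` is exceptional if `d² - ∑ mᵢ² = -1` and
`3d - ∑ mᵢ = 1`. -/
def IsExc7 (p : ℤ × (Fin 7 → ℤ)) : Prop :=
  p.1 ^ 2 - ∑ i, (p.2 i) ^ 2 = -1 ∧ 3 * p.1 - ∑ i, p.2 i = 1

/-- for `k ≥ 0`, a class `L = (a, b)` on `S₇` satisfies
`⟨L, ξ⟩ ≥ k` for every exceptional class `ξ ∈ E₇` iff `bᵢ ≥ k` for all `i`,
`a ≥ bᵢ + bⱼ + k` for all `i ≠ j`, `2a ≥ ∑_{i ∈ T} bᵢ + k` for every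
5-element subset `T` of `Fin 7`, and `3a ≥ 2bᵢ + ∑_{j ≠ i} bⱼ + k` for
every index `i`. -/

private lemma sq_sub_self_nonneg7 (m : ℤ) : 0 ≤ m ^ 2 - m := by
  rcases le_or_gt m 0 with h | h
  · nlinarith
  · nlinarith

private lemma mem01_of_sum7 (m : Fin 7 → ℤ)
    (h : ∑ i, ((m i) ^ 2 - m i) = 0) : ∀ i, m i = 0 ∨ m i = 1 := by
  intro i
  have h0 : ∀ j ∈ Finset.univ, (0:ℤ) ≤ (m j) ^ 2 - m j :=
    fun j _ => sq_sub_self_nonneg7 _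
  have hi := (Finset.sum_eq_zero_iff_of_nonneg h0).mp h i (Finset.mem_univ i)
  have : m i * (m i - 1) = 0 := by ring_nf; linarith [hi]
  rcases mul_eq_zero.mp this with h' | h'
  · exact Or.inl h'
  · exact Or.inr (by linarith)

/-- indicator of a finset -/
private def ind7 (T : Finset (Fin 7)) : Fin 7 → ℤ := fun j => if j ∈ T then 1 else 0

private lemma ind7_sum (T : Finset (Fin 7)) : ∑ j, ind7 T j = T.card := by
  simp [ind7, Finset.sum_ite_mem, Finset.univ_inter]

private lemma ind7_sq_sum (T : Finset (Fin 7)) : ∑ j, (ind7 T j) ^ 2 = T.card := by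
  have : ∀ j, (ind7 T j) ^ 2 = ind7 T j := by
    intro j; simp only [ind7]; split <;> norm_num
  rw [Finset.sum_congr rfl (fun j _ => this j), ind7_sum]

private lemma ind7_mul_sum (b : Fin 7 → ℤ) (T : Finset (Fin 7)) :
    ∑ j, b j * ind7 T j = ∑ j ∈ T, b j := by
  have : ∀ j, b j * ind7 T j = if j ∈ T then b j else 0 := by
    intro j; simp only [ind7]; split <;> ring
  rw [Finset.sum_congr rfl (fun j _ => this j), Finset.sum_ite_mem, Finset.univ_inter]

theorem k_very_ample_criterion_r7 (k : ℤ) (hk : 0 ≤ k)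
    (a : ℤ) (b : Fin 7 → ℤ) :
    (∀ ξ : ℤ × (Fin 7 → ℤ), IsExc7 ξ → k ≤ pairing7 (a, b) ξ) ↔
      ((∀ i, k ≤ b i) ∧
       (∀ i j, i ≠ j → b i + b j + k ≤ a) ∧
       (∀ T : Finset (Fin 7), T.card = 5 → (∑ i ∈ T, b i) + k ≤ 2 * a) ∧
       (∀ i : Fin 7,
         2 * b i + (∑ j ∈ Finset.univ \ {i}, b j) + k ≤ 3 * a)) := by
  constructor
  · intro H
    refine ⟨?_, ?_, ?_, ?_⟩
    · -- b i ≥ k, via ξ = (0, -indicator {i})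
      intro i
      have h := H (0, fun j => -(ind7 {i} j)) ?_
      · simp only [pairing7] at h
        have hs : ∑ j, b j * (-(ind7 {i} j)) = -(b i) := by
          have : ∑ j, b j * (-(ind7 {i} j)) = -(∑ j, b j * ind7 {i} j) := by
            rw [← Finset.sum_neg_distrib]; apply Finset.sum_congr rfl; intros; ring
          rw [this, ind7_mul_sum]; simp
        rw [hs] at h; simpa using h
      · constructor
        · have : ∑ j, (-(ind7 {i} j)) ^ 2 = ∑ j, (ind7 {i} j) ^ 2 := by
            apply Finset.sum_congr rfl; intros; ring
          simp only [this, ind7_sq_sum]; simp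
        · have : ∑ j, (-(ind7 {i} j)) = -(∑ j, ind7 {i} j) := by
            rw [← Finset.sum_neg_distrib]
          simp only [this, ind7_sum]; simp
    · -- a ≥ b i + b j + k
      intro i j hij
      have h := H (1, ind7 {i, j}) ?_
      · simp only [pairing7, ind7_mul_sum] at h
        rw [Finset.sum_pair hij] at h; linarith
      · have hc : ({i, j} : Finset (Fin 7)).card = 2 := Finset.card_pair hij
        constructor
        · rw [ind7_sq_sum, hc]; norm_num
        · rw [ind7_sum, hc]; norm_num
    · -- 2a ≥ ∑_T b + k
      intro T hT
      have h := H (2, ind7 T) ?_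
      · simp only [pairing7, ind7_mul_sum] at h; linarith
      · constructor
        · rw [ind7_sq_sum, hT]; norm_num
        · rw [ind7_sum, hT]; norm_num
    · -- 3a ≥ 2 b i + ∑_{j≠i} b + k
      intro i
      have h := H (3, fun j => 1 + ind7 {i} j) ?_
      · simp only [pairing7] at h
        have hs : ∑ j, b j * (1 + ind7 {i} j) = (∑ j, b j) + b i := by
          have : ∀ j, b j * (1 + ind7 {i} j) = b j + b j * ind7 {i} j := by
            intro j; ring
          rw [Finset.sum_congr rfl (fun j _ => this j), Finset.sum_add_distrib,
            ind7_mul_sum]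
          simp
        rw [hs] at h
        have hsplit : (∑ j, b j) = b i + ∑ j ∈ Finset.univ \ {i}, b j := by
          rw [Finset.sdiff_singleton_eq_erase]
          exact (Finset.add_sum_erase _ b (Finset.mem_univ i)).symm
        linarith
      · have h1 : ∑ j : Fin 7, (1 + ind7 {i} j) = 8 := by
          rw [Finset.sum_add_distrib, ind7_sum]; simp
        have h2 : ∑ j : Fin 7, (1 + ind7 {i} j) ^ 2 = 10 := by
          have : ∀ j, (1 + ind7 {i} j) ^ 2 = 1 + 3 * ind7 {i} j := by
            intro j; simp only [ind7]; split <;> norm_num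
          rw [Finset.sum_congr rfl (fun j _ => this j), Finset.sum_add_distrib,
            ← Finset.mul_sum, ind7_sum]
          simp
        exact ⟨by rw [h2]; norm_num, by rw [h1]; norm_num⟩
  · rintro ⟨H1, H2, H3, H4⟩ ⟨d, m⟩ ⟨he1, he2⟩
    simp only at he1 he2
    simp only [pairing7]
    -- bound d
    have hcs : (∑ i, m i) ^ 2 ≤ 7 * ∑ i, (m i) ^ 2 := by
      have := Finset.sum_mul_sq_le_sq_mul_sq Finset.univ (fun _ => (1:ℤ)) m
      simpa using this
    have hsum : ∑ i, m i = 3 * d - 1 := by linarith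
    have hsq : ∑ i, (m i) ^ 2 = d ^ 2 + 1 := by linarith
    rw [hsum, hsq] at hcs
    have hd0 : 0 ≤ d := by nlinarith [sq_nonneg (d + 1)]
    have hd3 : d ≤ 3 := by nlinarith [sq_nonneg (d - 4)]
    interval_cases d
    · -- d = 0 : m ∈ {-1,0}, sum = -1
      have hmem : ∀ i, m i = 0 ∨ m i = -1 := by
        have := mem01_of_sum7 (fun i => -(m i)) ?_
        · intro i; rcases this i with h | h
          · left; linarith
          · right; linarith
        · have e1 : ∑ i, ((-(m i)) ^ 2 - (-(m i))) = (∑ i, (m i)^2) + ∑ i, m i := by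
            rw [← Finset.sum_add_distrib]; apply Finset.sum_congr rfl; intros; ring
          rw [e1, hsum, hsq]; norm_num
      have key : ∀ i ∈ Finset.univ, k * (-(m i)) ≤ b i * (-(m i)) := by
        intro i _
        have hmn : 0 ≤ -(m i) := by rcases hmem i with h | h <;> simp [h]
        exact mul_le_mul_of_nonneg_right (H1 i) hmn
      have := Finset.sum_le_sum key
      have e2 : ∑ i, k * (-(m i)) = k := by
        rw [← Finset.mul_sum]
        have : ∑ i, -(m i) = 1 := by
          rw [Finset.sum_neg_distrib, hsum]; norm_num
        rw [this, mul_one]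
      have e3 : ∑ i, b i * (-(m i)) = -(∑ i, b i * m i) := by
        rw [← Finset.sum_neg_distrib]; apply Finset.sum_congr rfl; intros; ring
      rw [e2, e3] at this
      linarith
    · -- d = 1 : two ones
      have hmem : ∀ i, m i = 0 ∨ m i = 1 := by
        apply mem01_of_sum7
        rw [Finset.sum_sub_distrib, hsum, hsq]; norm_num
      set T := Finset.univ.filter (fun j => m j = 1) with hT
      have hind : ∀ j, m j = ind7 T j := by
        intro j; simp only [ind7, hT, Finset.mem_filter, Finset.mem_univ, true_and]
        rcases hmem j with h | h <;> simp [h]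
      have hcard : (T.card : ℤ) = 2 := by
        have : ∑ j, m j = T.card := by
          rw [Finset.sum_congr rfl (fun j _ => hind j), ind7_sum]
        rw [hsum] at this; linarith
      have hcard' : T.card = 2 := by exact_mod_cast hcard
      obtain ⟨i, j, hij, hTij⟩ := Finset.card_eq_two.mp hcard'
      have hbs : ∑ j, b j * m j = b i + b j := by
        rw [Finset.sum_congr rfl (fun t _ => by rw [hind t]), ind7_mul_sum, hTij,
          Finset.sum_pair hij]
      rw [hbs]
      have := H2 i j hij
      linarith
    · -- d = 2 : five ones
      have hmem : ∀ i, m i = 0 ∨ m i = 1 := by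
        apply mem01_of_sum7
        rw [Finset.sum_sub_distrib, hsum, hsq]; norm_num
      set T := Finset.univ.filter (fun j => m j = 1) with hT
      have hind : ∀ j, m j = ind7 T j := by
        intro j; simp only [ind7, hT, Finset.mem_filter, Finset.mem_univ, true_and]
        rcases hmem j with h | h <;> simp [h]
      have hcard : (T.card : ℤ) = 5 := by
        have : ∑ j, m j = T.card := by
          rw [Finset.sum_congr rfl (fun j _ => hind j), ind7_sum]
        rw [hsum] at this; linarith
      have hcard' : T.card = 5 := by exact_mod_cast hcard
      have hbs : ∑ j, b j * m j = ∑ j ∈ T, b j := by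
        rw [Finset.sum_congr rfl (fun t _ => by rw [hind t]), ind7_mul_sum]
      rw [hbs]
      have := H3 T hcard'
      linarith
    · -- d = 3 : one 2 and six 1's
      -- ∑ (m i ^2 - m i) = 2
      have hsum2 : ∑ i, ((m i) ^ 2 - m i) = 2 := by
        rw [Finset.sum_sub_distrib, hsum, hsq]; norm_num
      have hnn : ∀ j ∈ Finset.univ, (0:ℤ) ≤ (m j) ^ 2 - m j :=
        fun j _ => sq_sub_self_nonneg7 _
      -- there is an index with m i^2 - m i ≠ 0
      have hex : ∃ i, (m i) ^ 2 - m i ≠ 0 := by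
        by_contra hcon
        push_neg at hcon
        have : ∑ i, ((m i) ^ 2 - m i) = 0 :=
          Finset.sum_eq_zero (fun i _ => hcon i)
        omega
      obtain ⟨i, hi⟩ := hex
      have hle : (m i) ^ 2 - m i ≤ 2 := by
        calc (m i) ^ 2 - m i ≤ ∑ j, ((m j) ^ 2 - m j) :=
              Finset.single_le_sum hnn (Finset.mem_univ i)
          _ = 2 := hsum2
      -- m i = 2 or m i = -1
      have hmi : m i = 2 ∨ m i = -1 := by
        have h1 : 0 < (m i) ^ 2 - m i := lt_of_le_of_ne (sq_sub_self_nonneg7 _) (Ne.symm hi)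
        have h2 : m i * (m i - 1) = (m i) ^ 2 - m i := by ring
        -- integer with 0 < m(m-1) ≤ 2 means m(m-1) = 2, m = 2 or -1
        rcases le_or_gt (m i) 0 with h | h
        · right; nlinarith
        · left; nlinarith
      -- others: sum over erase
      have hrest0 : ∑ j ∈ Finset.univ.erase i, ((m j) ^ 2 - m j) = 2 - ((m i)^2 - m i) := by
        have := Finset.add_sum_erase Finset.univ (fun j => (m j) ^ 2 - m j) (Finset.mem_univ i)
        omega
      have hrestsum : ∑ j ∈ Finset.univ.erase i, m j = (3*3 - 1) - m i := by
        have := Finset.add_sum_erase Finset.univ m (Finset.mem_univ i)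
        rw [hsum] at this; omega
      rcases hmi with hmi | hmi
    -- m i = 2 case
      · have hz : ∑ j ∈ Finset.univ.erase i, ((m j) ^ 2 - m j) = 0 := by
          rw [hrest0, hmi]; norm_num
        have hmem : ∀ j ∈ Finset.univ.erase i, m j = 0 ∨ m j = 1 := by
          intro j hj
          have hj0 := (Finset.sum_eq_zero_iff_of_nonneg
            (fun j _ => sq_sub_self_nonneg7 (m j))).mp hz j hj
          have : m j * (m j - 1) = 0 := by nlinarith
          rcases mul_eq_zero.mp this with h' | h'
          · exact Or.inl h'
          · exact Or.inr (by linarith)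
        -- each ≤ 1 and sum is 6 over 6 elements → all 1
        have hall1 : ∀ j ∈ Finset.univ.erase i, m j = 1 := by
          have hsum6 : ∑ j ∈ Finset.univ.erase i, m j = 6 := by
            rw [hrestsum, hmi]; norm_num
          have hcard6 : (Finset.univ.erase i).card = 6 := by
            rw [Finset.card_erase_of_mem (Finset.mem_univ i)]; simp
          have hzz : ∑ j ∈ Finset.univ.erase i, (1 - m j) = 0 := by
            rw [Finset.sum_sub_distrib, Finset.sum_const, hcard6, hsum6]; norm_num
          intro j hj
          have := (Finset.sum_eq_zero_iff_of_nonneg ?_).mp hzz j hj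
          · linarith
          · intro t ht
            rcases hmem t ht with h | h <;> simp [h]
        have hbs : ∑ j, b j * m j = 2 * b i + ∑ j ∈ Finset.univ.erase i, b j := by
          have hr : ∑ j ∈ Finset.univ.erase i, b j * m j
              = ∑ j ∈ Finset.univ.erase i, b j :=
            Finset.sum_congr rfl (fun j hj => by rw [hall1 j hj, mul_one])
          have h' := Finset.add_sum_erase Finset.univ (fun j => b j * m j) (Finset.mem_univ i)
          rw [← h', hr, hmi]; ring
        rw [hbs]
        have := H4 i
        rw [Finset.sdiff_singleton_eq_erase] at this
        linarith
      · -- m i = -1: contradiction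
        exfalso
        have hz : ∑ j ∈ Finset.univ.erase i, ((m j) ^ 2 - m j) = 0 := by
          rw [hrest0, hmi]; norm_num
        have hmem : ∀ j ∈ Finset.univ.erase i, m j ≤ 1 := by
          intro j hj
          have hj0 := (Finset.sum_eq_zero_iff_of_nonneg
            (fun j _ => sq_sub_self_nonneg7 (m j))).mp hz j hj
          nlinarith
        have hsum9 : ∑ j ∈ Finset.univ.erase i, m j = 9 := by
          rw [hrestsum, hmi]; norm_num
        have hcard6 : (Finset.univ.erase i).card = 6 := by
          rw [Finset.card_erase_of_mem (Finset.mem_univ i)]; simp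
        have : ∑ j ∈ Finset.univ.erase i, m j ≤ 6 := by
          calc ∑ j ∈ Finset.univ.erase i, m j ≤ ∑ j ∈ Finset.univ.erase i, 1 :=
                Finset.sum_le_sum hmem
            _ = 6 := by rw [Finset.sum_const, hcard6]; norm_num
        omega
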